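/- Let K be a compact Hausdorff space, B the open unit ball of the complex Banach space C(K), f₀ ∈ B, and T : B → B the biholomorphic map T(f) = (f - f₀)/(1 - conj(f₀)·f). Let H(B) denote either A_u(B) or H^∞(B). Then for every ψ ∈ H(B), ψ ∘ T ∈ H(B), so the induced map T̂ on the spectrum M_{H(B)} given by T̂(τ)(ψ) = τ(ψ ∘ T) is well defined, and T̂ maps the fiber 𝔐_{f₀}(B) := {τ ∈ M_{H(B)} : τ(ψ) = ψ(f₀) for all ψ ∈ A_u(B)} onto the fiber 𝔐₀(B) := {τ ∈ M_{H(B)} : τ(ψ) = ψ(0) for all ψ ∈ A_u(B)}. -/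

import Mathlib

open Metric Filter Topology

namespace ClusterValue

variable (X : Type*) [NormedAddCommGroup X] [NormedSpace ℂ X]

/-- Membership in `A_u(B)`: analytic on the open unit ball, bounded there,
and uniformly continuous there. -/
def MemAu (f : X → ℂ) : Prop :=
  AnalyticOn ℂ f (ball (0 : X) 1) ∧ (∃ C : ℝ, ∀ x ∈ ball (0 : X) 1, ‖f x‖ ≤ C) ∧
    UniformContinuousOn f (ball (0 : X) 1)

/-- Membership in `H^∞(B)`: analytic on the open unit ball and bounded there. -/
def MemHinf (f : X → ℂ) : Prop :=
  AnalyticOn ℂ f (ball (0 : X) 1) ∧ (∃ C : ℝ, ∀ x ∈ ball (0 : X) 1, ‖f x‖ ≤ C)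

/-- A character (nonzero continuous multiplicative linear functional) of the algebra
of functions on the open unit ball of `X` determined by the membership predicate `Mem`.
Functions are identified when they agree on the ball. -/
structure Character (Mem : (X → ℂ) → Prop) : Type _ where
  toFun : (X → ℂ) → ℂ
  congr' : ∀ f g, Mem f → Mem g → (∀ x ∈ ball (0 : X) 1, f x = g x) → toFun f = toFun g
  map_add' : ∀ f g, Mem f → Mem g → toFun (f + g) = toFun f + toFun g
  map_mul' : ∀ f g, Mem f → Mem g → toFun (f * g) = toFun f * toFun g
  map_smul' : ∀ (c : ℂ) (f), Mem f → toFun (c • f) = c * toFun f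
  map_one' : toFun 1 = 1
  continuous' : ∃ C : ℝ, ∀ (f : X → ℂ) (M : ℝ), Mem f →
    (∀ x ∈ ball (0 : X) 1, ‖f x‖ ≤ M) → ‖toFun f‖ ≤ C * M

variable {X}

/-- The fiber over `0`: characters annihilating all continuous linear functionals. -/
def Character.inFiberZero {Mem : (X → ℂ) → Prop} (τ : Character X Mem) : Prop :=
  ∀ φ : X →L[ℂ] ℂ, τ.toFun ⇑φ = 0

/-- The fiber over `x'' ∈ X**`. -/
def Character.inFiber {Mem : (X → ℂ) → Prop} (τ : Character X Mem)
    (x'' : (X →L[ℂ] ℂ) →L[ℂ] ℂ) : Prop :=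
  ∀ φ : X →L[ℂ] ℂ, τ.toFun ⇑φ = x'' φ

variable (X)

/-- The cluster set of `f` at `0`: limits of `f` along weakly null nets (filters) in the ball. -/
def clusterSetZero (f : X → ℂ) : Set ℂ :=
  {z | ∃ l : Filter X, l.NeBot ∧ l ≤ 𝓟 (ball (0 : X) 1) ∧
    (∀ φ : X →L[ℂ] ℂ, Tendsto (fun x => φ x) l (𝓝 0)) ∧ Tendsto f l (𝓝 z)}

/-- The cluster set of `f` at `x'' ∈ X**`: limits of `f` along nets in the ball converging
weak-star to `x''`. -/
def clusterSet (f : X → ℂ) (x'' : (X →L[ℂ] ℂ) →L[ℂ] ℂ) : Set ℂ :=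
  {z | ∃ l : Filter X, l.NeBot ∧ l ≤ 𝓟 (ball (0 : X) 1) ∧
    (∀ φ : X →L[ℂ] ℂ, Tendsto (fun x => φ x) l (𝓝 (x'' φ))) ∧ Tendsto f l (𝓝 z)}

/-- A finite rank (bounded linear) operator. -/
def FiniteRank (S : X →L[ℂ] X) : Prop :=
  FiniteDimensional ℂ ↥(LinearMap.range (S : X →ₗ[ℂ] X))

/-- Finite type polynomials: the subalgebra of functions generated by the
continuous linear functionals (and constants). -/
def IsFiniteTypePoly (p : X → ℂ) : Prop :=
  p ∈ Algebra.adjoin ℂ (Set.range fun φ : X →L[ℂ] ℂ => (⇑φ : X → ℂ))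

/-- Membership in `A(B)`: uniform limits on the ball of finite type polynomials. -/
def MemA (f : X → ℂ) : Prop :=
  ∀ ε > (0 : ℝ), ∃ p : X → ℂ, IsFiniteTypePoly X p ∧ ∀ x ∈ ball (0 : X) 1, ‖f x - p x‖ ≤ ε

/-- A continuous polynomial: a finite sum of (diagonals of) continuous multilinear maps. -/
def IsContPoly (p : X → ℂ) : Prop :=
  ∃ (N : ℕ) (M : ∀ k : ℕ, ContinuousMultilinearMap ℂ (fun _ : Fin k => X) ℂ),
    ∀ x, p x = ∑ k ∈ Finset.range N, M k (fun _ => x)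

end ClusterValue

section Aux18
open Metric Filter Topology Complex ComplexConjugate

section Pointwise

lemma denom_ne (a z : ℂ) (h : ‖a‖ * ‖z‖ < 1) : 1 - conj a * z ≠ 0 := by
  intro hz
  have h1 : ‖conj a * z‖ < 1 := by
    rw [norm_mul, Complex.norm_conj]; exact lt_of_le_of_lt le_rfl h
  have h2 : conj a * z = 1 := (sub_eq_zero.mp hz).symm
  rw [h2] at h1; simp at h1

lemma denom_lower (a z : ℂ) (ρ : ℝ) (ha : ‖a‖ ≤ ρ) (hz : ‖z‖ ≤ 1) :
    1 - ρ ≤ ‖1 - conj a * z‖ := by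
  have h1 : ‖conj a * z‖ ≤ ρ := by
    rw [norm_mul, Complex.norm_conj]
    calc ‖a‖ * ‖z‖ ≤ ρ * 1 :=
      mul_le_mul ha hz (norm_nonneg z) (le_trans (norm_nonneg a) ha)
    _ = ρ := mul_one ρ
  have h2 := norm_sub_norm_le (1 : ℂ) (conj a * z)
  simp only [norm_one] at h2
  linarith


lemma normSq_identity' (a z : ℂ) :
    normSq (1 - conj a * z) - normSq (z - a) = (1 - normSq a) * (1 - normSq z) := by
  have key : ((normSq (1 - conj a * z) : ℂ) - normSq (z - a)) =
      ((1 - normSq a : ℝ) : ℂ) * ((1 - normSq z : ℝ) : ℂ) := by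
    push_cast
    rw [← Complex.mul_conj, ← Complex.mul_conj, ← Complex.mul_conj, ← Complex.mul_conj]
    simp only [map_sub, map_mul, map_one, Complex.conj_conj]
    ring
  have := congrArg Complex.re key
  simpa using this

lemma abs_moebius_le (a z : ℂ) (ρ r : ℝ) (ha : ‖a‖ ≤ ρ) (hz : ‖z‖ ≤ r)
    (hρ : ρ < 1) (hr : r < 1) (hρ0 : 0 ≤ ρ) (hr0 : 0 ≤ r) :
    ‖(z - a)/(1 - conj a * z)‖ ≤ Real.sqrt (1 - (1-ρ^2)*(1-r^2)/4) := by
  have ha0 := norm_nonneg a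
  have hz0 := norm_nonneg z
  have hd0 : 1 - ρ * r > 0 := by nlinarith
  have hdlow : 1 - ρ * r ≤ ‖1 - conj a * z‖ := by
    have h1 : ‖conj a * z‖ ≤ ρ * r := by
      rw [norm_mul, Complex.norm_conj]; exact mul_le_mul ha hz hz0 hρ0
    calc 1 - ρ * r ≤ 1 - ‖conj a * z‖ := by linarith
    _ ≤ ‖(1 : ℂ)‖ - ‖conj a * z‖ := by simp
    _ ≤ ‖1 - conj a * z‖ := norm_sub_norm_le 1 (conj a * z)
  have e1 : (0:ℝ) ≤ 1 - ρ^2 := by nlinarith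
  have e2 : (0:ℝ) ≤ 1 - r^2 := by nlinarith
  have e3 : (0:ℝ) ≤ (1-ρ^2)*(1-r^2) := mul_nonneg e1 e2
  have hc2nonneg : 0 ≤ 1 - (1-ρ^2)*(1-r^2)/4 := by nlinarith
  have hprod : (1-ρ^2)*(1-r^2) ≤ (1 - normSq a) * (1 - normSq z) := by
    have h1 : normSq a ≤ ρ^2 := by rw [← Complex.sq_norm]; nlinarith
    have h2 : normSq z ≤ r^2 := by rw [← Complex.sq_norm]; nlinarith
    exact mul_le_mul (by linarith) (by linarith) e2 (by linarith)
  have hden4 : normSq (1 - conj a * z) ≤ 4 := by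
    rw [← Complex.sq_norm]
    have habs : ‖1 - conj a * z‖ ≤ 2 := by
      have ht : ‖1 - conj a * z‖ ≤ ‖(1 : ℂ)‖ + ‖conj a * z‖ := by
        exact norm_sub_le 1 (conj a * z)
      have h1 : ‖conj a * z‖ ≤ ρ * r := by
        rw [norm_mul, Complex.norm_conj]; exact mul_le_mul ha hz hz0 hρ0
      simp only [norm_one] at ht
      nlinarith
    nlinarith [norm_nonneg (1 - conj a * z)]
  have hkey : normSq (z - a) ≤ (1 - (1-ρ^2)*(1-r^2)/4) * normSq (1 - conj a * z) := by
    have hid := normSq_identity' a z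
    nlinarith [Complex.normSq_nonneg (1 - conj a * z),
      mul_nonneg e3 (by linarith : (0:ℝ) ≤ 4 - normSq (1 - conj a * z))]
  have habsle : ‖z - a‖ ≤ Real.sqrt (1 - (1-ρ^2)*(1-r^2)/4) * ‖1 - conj a * z‖ := by
    rw [Complex.norm_def, Complex.norm_def, ← Real.sqrt_mul hc2nonneg]
    exact Real.sqrt_le_sqrt hkey
  rw [norm_div]
  have hdenpos : 0 < ‖1 - conj a * z‖ := lt_of_lt_of_le hd0 hdlow
  rw [div_le_iff₀ hdenpos]
  exact habsle

lemma moebius_cancel (a z : ℂ) (ha : ‖a‖ < 1) (hz : ‖z‖ < 1) :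
    ((z - a)/(1 - conj a * z) + a) / (1 + conj a * ((z - a)/(1 - conj a * z))) = z := by
  have haz : ‖a‖ * ‖z‖ < 1 := by
    nlinarith [norm_nonneg a, norm_nonneg z]
  have hd : 1 - conj a * z ≠ 0 := denom_ne a z haz
  have haa : 1 - conj a * a ≠ 0 := by
    apply denom_ne; nlinarith [norm_nonneg a]
  have haa' : 1 - a * conj a ≠ 0 := by rw [mul_comm]; exact haa
  have hden : 1 + conj a * ((z - a)/(1 - conj a * z)) = (1 - conj a * a)/(1 - conj a * z) := by
    field_simp; ring
  rw [hden, div_add' _ _ _ hd, div_div_div_cancel_right₀ hd, div_eq_iff haa]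
  ring

end Pointwise

section CK
variable {K : Type*} [TopologicalSpace K] [CompactSpace K]

lemma ck_apply_lt (g₀ f : C(K, ℂ)) (hg₀ : ‖g₀‖ < 1) (hf : ‖f‖ < 1) (t : K) :
    ‖g₀ t‖ * ‖f t‖ < 1 := by
  have h1 : ‖g₀ t‖ ≤ ‖g₀‖ := by
    exact ContinuousMap.norm_coe_le_norm g₀ t
  have h2 : ‖f t‖ ≤ ‖f‖ := by
    exact ContinuousMap.norm_coe_le_norm f t
  nlinarith [norm_nonneg (g₀ t), norm_nonneg (f t), norm_nonneg g₀, norm_nonneg f]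

/-- The Möbius map on the ball of `C(K,ℂ)`, junk value `0` outside. -/
noncomputable def moebiusMap (g₀ f : C(K, ℂ)) : C(K, ℂ) :=
  if h : ‖g₀‖ < 1 ∧ ‖f‖ < 1 then
    ⟨fun t => (f t - g₀ t) / (1 - conj (g₀ t) * f t), by
      apply Continuous.div (by fun_prop)
        (continuous_const.sub ((continuous_star.comp g₀.continuous).mul f.continuous))
      intro t
      exact denom_ne _ _ (ck_apply_lt g₀ f h.1 h.2 t)⟩
  else 0

lemma moebiusMap_apply (g₀ f : C(K, ℂ)) (hg₀ : ‖g₀‖ < 1) (hf : ‖f‖ < 1) (t : K) :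
    moebiusMap g₀ f t = (f t - g₀ t) / (1 - conj (g₀ t) * f t) := by
  rw [moebiusMap, dif_pos ⟨hg₀, hf⟩]; rfl

/-- The explicit inverse of the denominator, junk value `1` outside. -/
noncomputable def invDenom (g₀ f : C(K, ℂ)) : C(K, ℂ) :=
  if h : ‖g₀‖ < 1 ∧ ‖f‖ < 1 then
    ⟨fun t => (1 - conj (g₀ t) * f t)⁻¹, by
      apply Continuous.inv₀
        (continuous_const.sub ((continuous_star.comp g₀.continuous).mul f.continuous))
      intro t
      exact denom_ne _ _ (ck_apply_lt g₀ f h.1 h.2 t)⟩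
  else 1

lemma invDenom_apply (g₀ f : C(K, ℂ)) (hg₀ : ‖g₀‖ < 1) (hf : ‖f‖ < 1) (t : K) :
    invDenom g₀ f t = (1 - conj (g₀ t) * f t)⁻¹ := by
  rw [invDenom, dif_pos ⟨hg₀, hf⟩]; rfl

lemma denom_apply (g₀ f : C(K, ℂ)) (t : K) :
    (1 - star g₀ * f) t = 1 - conj (g₀ t) * f t := by
  simp [ContinuousMap.sub_apply, ContinuousMap.mul_apply]

lemma denom_mul_invDenom (g₀ f : C(K, ℂ)) (hg₀ : ‖g₀‖ < 1) (hf : ‖f‖ < 1) :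
    (1 - star g₀ * f) * invDenom g₀ f = 1 := by
  ext t
  rw [ContinuousMap.mul_apply, denom_apply, invDenom_apply g₀ f hg₀ hf]
  rw [mul_inv_cancel₀ (denom_ne _ _ (ck_apply_lt g₀ f hg₀ hf t))]
  rfl

lemma isUnit_denom (g₀ f : C(K, ℂ)) (hg₀ : ‖g₀‖ < 1) (hf : ‖f‖ < 1) :
    IsUnit (1 - star g₀ * f) :=
  IsUnit.of_mul_eq_one _ (denom_mul_invDenom g₀ f hg₀ hf)

lemma ringInverse_denom (g₀ f : C(K, ℂ)) (hg₀ : ‖g₀‖ < 1) (hf : ‖f‖ < 1) :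
    Ring.inverse (1 - star g₀ * f) = invDenom g₀ f := by
  have hu := isUnit_denom g₀ f hg₀ hf
  rw [← hu.unit_spec, Ring.inverse_unit]
  exact Units.inv_eq_of_mul_eq_one_right (by rw [hu.unit_spec]; exact denom_mul_invDenom g₀ f hg₀ hf)

lemma norm_invDenom_le (g₀ f : C(K, ℂ)) (hg₀ : ‖g₀‖ < 1) (hf : ‖f‖ < 1) :
    ‖invDenom g₀ f‖ ≤ (1 - ‖g₀‖)⁻¹ := by
  have hδ : 0 < 1 - ‖g₀‖ := by linarith
  rw [ContinuousMap.norm_le _ (le_of_lt (inv_pos.mpr hδ))]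
  intro t
  rw [invDenom_apply g₀ f hg₀ hf, norm_inv]
  have hlow : 1 - ‖g₀‖ ≤ ‖1 - conj (g₀ t) * f t‖ := by
    apply denom_lower
    · exact ContinuousMap.norm_coe_le_norm g₀ t
    · exact le_of_lt (lt_of_le_of_lt (ContinuousMap.norm_coe_le_norm f t) hf)
  exact inv_anti₀ hδ hlow

end CK

section CK2
variable {K : Type*} [TopologicalSpace K] [CompactSpace K]

lemma moebiusMap_maps (g₀ : C(K, ℂ)) (hg₀ : ‖g₀‖ < 1) :
    Set.MapsTo (moebiusMap g₀) (ball (0 : C(K, ℂ)) 1) (ball (0 : C(K, ℂ)) 1) := by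
  intro f hf
  rw [mem_ball_zero_iff] at hf ⊢
  set ρ := ‖g₀‖
  set r := ‖f‖
  have hρ0 : 0 ≤ ρ := norm_nonneg g₀
  have hr0 : 0 ≤ r := norm_nonneg f
  have e1 : (0:ℝ) ≤ 1 - ρ^2 := by nlinarith
  have e2 : (0:ℝ) ≤ 1 - r^2 := by nlinarith
  have hlt : 1 - (1-ρ^2)*(1-r^2)/4 < 1 := by
    nlinarith [mul_pos (show (0:ℝ) < 1-ρ^2 by nlinarith) (show (0:ℝ) < 1-r^2 by nlinarith)]
  have hge : 0 ≤ 1 - (1-ρ^2)*(1-r^2)/4 := by nlinarith [mul_nonneg e1 e2]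
  have key : ‖moebiusMap g₀ f‖ ≤ Real.sqrt (1 - (1-ρ^2)*(1-r^2)/4) := by
    rw [ContinuousMap.norm_le _ (Real.sqrt_nonneg _)]
    intro t
    rw [moebiusMap_apply g₀ f hg₀ hf t]
    apply abs_moebius_le _ _ ρ r _ _ hg₀ hf hρ0 hr0
    · exact ContinuousMap.norm_coe_le_norm g₀ t
    · exact ContinuousMap.norm_coe_le_norm f t
  have : Real.sqrt (1 - (1-ρ^2)*(1-r^2)/4) < 1 := by
    have := Real.sqrt_lt_sqrt hge hlt
    rwa [Real.sqrt_one] at this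
  linarith

lemma formula_eq (g₀ : C(K, ℂ)) (hg₀ : ‖g₀‖ < 1) (T : C(K, ℂ) → C(K, ℂ))
    (hT : ∀ f ∈ ball (0 : C(K, ℂ)) 1, ∀ t : K,
      T f t = (f t - g₀ t) / (1 - conj (g₀ t) * f t)) :
    Set.EqOn T (fun f => (f - g₀) * Ring.inverse (1 - star g₀ * f))
      (ball (0 : C(K, ℂ)) 1) := by
  intro f hf
  have hf' : ‖f‖ < 1 := mem_ball_zero_iff.mp hf
  ext t
  rw [hT f hf t]
  show _ = ((f - g₀) * Ring.inverse (1 - star g₀ * f)) t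
  rw [ringInverse_denom g₀ f hg₀ hf', ContinuousMap.mul_apply, ContinuousMap.sub_apply,
    invDenom_apply g₀ f hg₀ hf', div_eq_mul_inv]

lemma moebius_analytic (g₀ : C(K, ℂ)) (hg₀ : ‖g₀‖ < 1) (T : C(K, ℂ) → C(K, ℂ))
    (hT : ∀ f ∈ ball (0 : C(K, ℂ)) 1, ∀ t : K,
      T f t = (f t - g₀ t) / (1 - conj (g₀ t) * f t)) :
    AnalyticOnNhd ℂ T (ball (0 : C(K, ℂ)) 1) := by
  apply AnalyticOnNhd.congr isOpen_ball (f := fun f => (f - g₀) * Ring.inverse (1 - star g₀ * f))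
  · intro f hf
    have hf' : ‖f‖ < 1 := mem_ball_zero_iff.mp hf
    have A1 : AnalyticAt ℂ (fun f : C(K, ℂ) => f - g₀) f := analyticAt_id.sub analyticAt_const
    have A2 : AnalyticAt ℂ (fun f : C(K, ℂ) => 1 - star g₀ * f) f := by
      apply analyticAt_const.sub
      exact (ContinuousLinearMap.mul ℂ C(K, ℂ) (star g₀)).analyticAt f
    have hu := isUnit_denom g₀ f hg₀ hf'
    have A3 : AnalyticAt ℂ (Ring.inverse : C(K, ℂ) → C(K, ℂ)) (1 - star g₀ * f) := by
      have := analyticAt_inverse (𝕜 := ℂ) hu.unit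
      rwa [hu.unit_spec] at this
    have A4 : AnalyticAt ℂ (fun f : C(K, ℂ) => Ring.inverse (1 - star g₀ * f)) f := by
      have := AnalyticAt.comp (𝕜 := ℂ) (g := (Ring.inverse : C(K, ℂ) → C(K, ℂ)))
        (f := fun f : C(K, ℂ) => 1 - star g₀ * f) (x := f) A3 A2
      exact this
    exact A1.mul A4
  · exact fun f hf => (formula_eq g₀ hg₀ T hT hf).symm

lemma moebius_lipschitz (g₀ : C(K, ℂ)) (hg₀ : ‖g₀‖ < 1) (T : C(K, ℂ) → C(K, ℂ))
    (hT : ∀ f ∈ ball (0 : C(K, ℂ)) 1, ∀ t : K,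
      T f t = (f t - g₀ t) / (1 - conj (g₀ t) * f t)) :
    UniformContinuousOn T (ball (0 : C(K, ℂ)) 1) := by
  set δ : ℝ := 1 - ‖g₀‖ with hδdef
  have hδ : 0 < δ := by simp only [hδdef]; linarith
  set L : ℝ := δ⁻¹ + 2 * (δ⁻¹ * δ⁻¹) with hLdef
  have hL0 : 0 ≤ L := by positivity
  apply LipschitzOnWith.uniformContinuousOn (K := L.toNNReal)
  apply LipschitzOnWith.of_dist_le_mul
  intro f hf h hh
  have hf' : ‖f‖ < 1 := mem_ball_zero_iff.mp hf
  have hh' : ‖h‖ < 1 := mem_ball_zero_iff.mp hh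
  set vf := invDenom g₀ f with hvf
  set vh := invDenom g₀ h with hvh
  have e1 : (1 - star g₀ * f) * vf = 1 := denom_mul_invDenom g₀ f hg₀ hf'
  have e2 : (1 - star g₀ * h) * vh = 1 := denom_mul_invDenom g₀ h hg₀ hh'
  have hTf : T f = (f - g₀) * vf := by
    have h0 : T f = (f - g₀) * Ring.inverse (1 - star g₀ * f) := formula_eq g₀ hg₀ T hT hf
    rw [h0, ringInverse_denom g₀ f hg₀ hf']
  have hTh : T h = (h - g₀) * vh := by
    have h0 : T h = (h - g₀) * Ring.inverse (1 - star g₀ * h) := formula_eq g₀ hg₀ T hT hh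
    rw [h0, ringInverse_denom g₀ h hg₀ hh']
  have key : T f - T h = (f - h) * vf + (h - g₀) * (vf * (star g₀ * (f - h)) * vh) := by
    rw [hTf, hTh]
    linear_combination ((h - g₀) * vh) * e1 - ((h - g₀) * vf) * e2
  have nvf : ‖vf‖ ≤ δ⁻¹ := norm_invDenom_le g₀ f hg₀ hf'
  have nvh : ‖vh‖ ≤ δ⁻¹ := norm_invDenom_le g₀ h hg₀ hh'
  have ng : ‖star g₀‖ ≤ 1 := by rw [norm_star]; linarith
  have nhg : ‖h - g₀‖ ≤ 2 := by
    calc ‖h - g₀‖ ≤ ‖h‖ + ‖g₀‖ := norm_sub_le h g₀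
    _ ≤ 2 := by linarith
  rw [dist_eq_norm, dist_eq_norm, key, Real.coe_toNNReal L hL0]
  set d := ‖f - h‖ with hd
  have hd0 : 0 ≤ d := norm_nonneg _
  have t1 : ‖(f - h) * vf‖ ≤ d * δ⁻¹ :=
    le_trans (norm_mul_le _ _) (mul_le_mul_of_nonneg_left nvf hd0)
  have t2 : ‖(h - g₀) * (vf * (star g₀ * (f - h)) * vh)‖ ≤ 2 * (δ⁻¹ * (1 * d) * δ⁻¹) := by
    have i1 : ‖star g₀ * (f - h)‖ ≤ 1 * d :=
      le_trans (norm_mul_le _ _) (mul_le_mul_of_nonneg_right ng hd0)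
    have i2 : ‖vf * (star g₀ * (f - h))‖ ≤ δ⁻¹ * (1 * d) :=
      le_trans (norm_mul_le _ _)
        (mul_le_mul nvf i1 (norm_nonneg _) (le_of_lt (inv_pos.mpr hδ)))
    have i3 : ‖vf * (star g₀ * (f - h)) * vh‖ ≤ δ⁻¹ * (1 * d) * δ⁻¹ :=
      le_trans (norm_mul_le _ _)
        (mul_le_mul i2 nvh (norm_nonneg _) (by positivity))
    exact le_trans (norm_mul_le _ _)
      (mul_le_mul nhg i3 (norm_nonneg _) (by norm_num))
  calc ‖(f - h) * vf + (h - g₀) * (vf * (star g₀ * (f - h)) * vh)‖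
      ≤ ‖(f - h) * vf‖ + ‖(h - g₀) * (vf * (star g₀ * (f - h)) * vh)‖ := norm_add_le _ _
  _ ≤ d * δ⁻¹ + 2 * (δ⁻¹ * (1 * d) * δ⁻¹) := add_le_add t1 t2
  _ = L * d := by rw [hLdef]; ring

end CK2

section Comp

lemma ucOn_comp {α β γ : Type*} [UniformSpace α] [UniformSpace β] [UniformSpace γ]
    {T : α → β} {ψ : β → γ} {s : Set α} {t : Set β} (hT : UniformContinuousOn T s)
    (hψ : UniformContinuousOn ψ t) (hm : Set.MapsTo T s t) :
    UniformContinuousOn (fun x => ψ (T x)) s := by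
  rw [uniformContinuousOn_iff_restrict] at hT hψ ⊢
  have hu : UniformContinuous (fun x : s => (⟨T x, hm x.2⟩ : t)) := hT.subtype_mk _
  exact hψ.comp hu

variable {K : Type*} [TopologicalSpace K] [CompactSpace K]

lemma comp_analyticOn {T : C(K, ℂ) → C(K, ℂ)}
    (hanal : AnalyticOnNhd ℂ T (ball (0 : C(K, ℂ)) 1))
    (hmaps : Set.MapsTo T (ball (0 : C(K, ℂ)) 1) (ball (0 : C(K, ℂ)) 1))
    {ψ : C(K, ℂ) → ℂ} (hψ : AnalyticOn ℂ ψ (ball (0 : C(K, ℂ)) 1)) :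
    AnalyticOn ℂ (fun f => ψ (T f)) (ball (0 : C(K, ℂ)) 1) := by
  rw [isOpen_ball.analyticOn_iff_analyticOnNhd] at hψ ⊢
  have := hψ.comp hanal hmaps
  exact this

lemma comp_memAu {T : C(K, ℂ) → C(K, ℂ)}
    (hanal : AnalyticOnNhd ℂ T (ball (0 : C(K, ℂ)) 1))
    (huc : UniformContinuousOn T (ball (0 : C(K, ℂ)) 1))
    (hmaps : Set.MapsTo T (ball (0 : C(K, ℂ)) 1) (ball (0 : C(K, ℂ)) 1))
    (ψ : C(K, ℂ) → ℂ) (hψ : ClusterValue.MemAu C(K, ℂ) ψ) :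
    ClusterValue.MemAu C(K, ℂ) (fun f => ψ (T f)) := by
  obtain ⟨h1, ⟨C, hC⟩, h3⟩ := hψ
  exact ⟨comp_analyticOn hanal hmaps h1, ⟨C, fun x hx => hC (T x) (hmaps hx)⟩,
    ucOn_comp huc h3 hmaps⟩

lemma comp_memHinf {T : C(K, ℂ) → C(K, ℂ)}
    (hanal : AnalyticOnNhd ℂ T (ball (0 : C(K, ℂ)) 1))
    (hmaps : Set.MapsTo T (ball (0 : C(K, ℂ)) 1) (ball (0 : C(K, ℂ)) 1))
    (ψ : C(K, ℂ) → ℂ) (hψ : ClusterValue.MemHinf C(K, ℂ) ψ) :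
    ClusterValue.MemHinf C(K, ℂ) (fun f => ψ (T f)) := by
  obtain ⟨h1, ⟨C, hC⟩⟩ := hψ
  exact ⟨comp_analyticOn hanal hmaps h1, ⟨C, fun x hx => hC (T x) (hmaps hx)⟩⟩

/-- Pushforward of a character along a self-map of the ball. -/
def pushChar (Mem : (C(K, ℂ) → ℂ) → Prop) (T : C(K, ℂ) → C(K, ℂ))
    (hmaps : Set.MapsTo T (ball (0 : C(K, ℂ)) 1) (ball (0 : C(K, ℂ)) 1))
    (hcomp : ∀ ψ, Mem ψ → Mem (fun f => ψ (T f)))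
    (τ : ClusterValue.Character C(K, ℂ) Mem) : ClusterValue.Character C(K, ℂ) Mem where
  toFun := fun ψ => τ.toFun (fun f => ψ (T f))
  congr' f g hf hg hfg :=
    τ.congr' _ _ (hcomp f hf) (hcomp g hg) (fun x hx => hfg (T x) (hmaps hx))
  map_add' f g hf hg := τ.map_add' _ _ (hcomp f hf) (hcomp g hg)
  map_mul' f g hf hg := τ.map_mul' _ _ (hcomp f hf) (hcomp g hg)
  map_smul' c f hf := τ.map_smul' c _ (hcomp f hf)
  map_one' := τ.map_one'
  continuous' := by
    obtain ⟨C, hC⟩ := τ.continuous'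
    exact ⟨C, fun ψ M hψ hM => hC _ M (hcomp ψ hψ) (fun x hx => hM (T x) (hmaps hx))⟩

end Comp

end Aux18

open Metric Filter Topology ClusterValue in
/-- For `f₀` in the open unit ball `B` of `C(K)` and the biholomorphic map
`T f = (f - f₀)/(1 - conj f₀ · f)` of `B`, and `H(B)` either of the algebras `A_u(B)` or
`H^∞(B)`: composition with `T` preserves `H(B)`, the induced map `T̂` on the spectrum,
`T̂(τ)(ψ) = τ(ψ ∘ T)`, is well defined, and `T̂` maps the fiber `𝔐_{f₀}(B)` onto the
fiber `𝔐₀(B)`. -/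
theorem statement18 (K : Type*) [TopologicalSpace K] [CompactSpace K] [T2Space K]
    (f₀ : C(K, ℂ)) (hf₀ : f₀ ∈ ball (0 : C(K, ℂ)) 1)
    (T : C(K, ℂ) → C(K, ℂ))
    (hT : ∀ f ∈ ball (0 : C(K, ℂ)) 1, ∀ t : K,
      T f t = (f t - f₀ t) / (1 - (starRingEnd ℂ) (f₀ t) * f t))
    (hTmaps : Set.MapsTo T (ball (0 : C(K, ℂ)) 1) (ball (0 : C(K, ℂ)) 1))
    -- `H(B)` denotes either `A_u(B)` or `H^∞(B)`
    (Mem : (C(K, ℂ) → ℂ) → Prop)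
    (hMem : Mem = MemAu C(K, ℂ) ∨ Mem = MemHinf C(K, ℂ)) :
    -- composition with `T` preserves the algebra `H(B)`
    (∀ ψ : C(K, ℂ) → ℂ, Mem ψ → Mem (fun f => ψ (T f))) ∧
    -- the induced map `T̂` is well defined on the spectrum of `H(B)`
    (∀ τ : Character C(K, ℂ) Mem, ∃ σ : Character C(K, ℂ) Mem,
      ∀ ψ : C(K, ℂ) → ℂ, Mem ψ → σ.toFun ψ = τ.toFun (fun f => ψ (T f))) ∧
    -- `T̂` maps the fiber `𝔐_{f₀}(B)` into the fiber `𝔐₀(B)`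
    (∀ τ : Character C(K, ℂ) Mem,
      (∀ ψ : C(K, ℂ) → ℂ, MemAu C(K, ℂ) ψ → τ.toFun ψ = ψ f₀) →
      ∀ σ : Character C(K, ℂ) Mem,
        (∀ ψ : C(K, ℂ) → ℂ, Mem ψ → σ.toFun ψ = τ.toFun (fun f => ψ (T f))) →
        ∀ ψ : C(K, ℂ) → ℂ, MemAu C(K, ℂ) ψ → σ.toFun ψ = ψ 0) ∧
    -- `T̂ : 𝔐_{f₀}(B) → 𝔐₀(B)` is onto
    (∀ σ : Character C(K, ℂ) Mem,
      (∀ ψ : C(K, ℂ) → ℂ, MemAu C(K, ℂ) ψ → σ.toFun ψ = ψ 0) →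
      ∃ τ : Character C(K, ℂ) Mem,
        (∀ ψ : C(K, ℂ) → ℂ, MemAu C(K, ℂ) ψ → τ.toFun ψ = ψ f₀) ∧
        ∀ ψ : C(K, ℂ) → ℂ, Mem ψ → σ.toFun ψ = τ.toFun (fun f => ψ (T f))) := by

  have hf₀' : ‖f₀‖ < 1 := mem_ball_zero_iff.mp hf₀
  have hanalT := moebius_analytic f₀ hf₀' T hT
  have hucT := moebius_lipschitz f₀ hf₀' T hT
  have compAuT : ∀ ψ, MemAu C(K, ℂ) ψ → MemAu C(K, ℂ) (fun f => ψ (T f)) :=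
    fun ψ hψ => comp_memAu hanalT hucT hTmaps ψ hψ
  have compMemT : ∀ ψ, Mem ψ → Mem (fun f => ψ (T f)) := by
    rcases hMem with h | h <;> subst h
    · exact compAuT
    · exact fun ψ hψ => comp_memHinf hanalT hTmaps ψ hψ
  have hTf₀ : T f₀ = 0 := by
    ext t
    rw [hT f₀ hf₀ t]
    simp
  have hnf₀ : ‖-f₀‖ < 1 := by rwa [norm_neg]
  set S : C(K, ℂ) → C(K, ℂ) := moebiusMap (-f₀) with hSdef
  have hS : ∀ f ∈ ball (0 : C(K, ℂ)) 1, ∀ t : K,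
      S f t = (f t - (-f₀) t) / (1 - (starRingEnd ℂ) ((-f₀) t) * f t) := fun f hf t =>
    moebiusMap_apply (-f₀) f hnf₀ (mem_ball_zero_iff.mp hf) t
  have hSmaps := moebiusMap_maps (-f₀) hnf₀
  have hanalS := moebius_analytic (-f₀) hnf₀ S hS
  have hucS := moebius_lipschitz (-f₀) hnf₀ S hS
  have compAuS : ∀ ψ, MemAu C(K, ℂ) ψ → MemAu C(K, ℂ) (fun f => ψ (S f)) :=
    fun ψ hψ => comp_memAu hanalS hucS hSmaps ψ hψ
  have compMemS : ∀ ψ, Mem ψ → Mem (fun f => ψ (S f)) := by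
    rcases hMem with h | h <;> subst h
    · exact compAuS
    · exact fun ψ hψ => comp_memHinf hanalS hSmaps ψ hψ
  have hS0 : S 0 = f₀ := by
    ext t
    rw [hS 0 (by simp) t]
    simp
  have hTS : ∀ x ∈ ball (0 : C(K, ℂ)) 1, T (S x) = x := by
    intro x hx
    ext t
    rw [hT (S x) (hSmaps hx) t, hS x hx t]
    have ha : ‖f₀ t‖ < 1 :=
      lt_of_le_of_lt (by exact ContinuousMap.norm_coe_le_norm f₀ t)
        hf₀'
    have hz : ‖x t‖ < 1 :=
      lt_of_le_of_lt (by exact ContinuousMap.norm_coe_le_norm x t)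
        (mem_ball_zero_iff.mp hx)
    have key := moebius_cancel (-(f₀ t)) (x t) (by simpa using ha) hz
    simp only [ContinuousMap.neg_apply, map_neg, mul_neg, neg_mul, sub_neg_eq_add,
      neg_neg] at key ⊢
    simp only [← sub_eq_add_neg] at key
    exact key
  refine ⟨compMemT, ?_, ?_, ?_⟩
  · intro τ
    exact ⟨pushChar Mem T hTmaps compMemT τ, fun ψ _ => rfl⟩
  · intro τ hτ σ hσ ψ hψ
    have hψMem : Mem ψ := by
      rcases hMem with h | h <;> subst h
      · exact hψ
      · exact ⟨hψ.1, hψ.2.1⟩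
    rw [hσ ψ hψMem, hτ _ (compAuT ψ hψ)]
    simp only [hTf₀]
  · intro σ hσ0
    refine ⟨pushChar Mem S hSmaps compMemS σ, ?_, ?_⟩
    · intro ψ hψ
      show σ.toFun (fun f => ψ (S f)) = ψ f₀
      rw [hσ0 _ (compAuS ψ hψ)]
      simp only [hS0]
    · intro ψ hψ
      show σ.toFun ψ = σ.toFun (fun f => ψ (T (S f)))
      exact σ.congr' ψ _ hψ (compMemS _ (compMemT ψ hψ)) (fun x hx => by rw [hTS x hx])
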